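/- Let T be a dagger Frobenius monad on a dagger category C, i.e. a monad (T, μ, η) where T is a dagger functor and T(μ_A) ∘ μ†_{T A} = μ_{T A} ∘ T(μ_A†) for all A. Then the assignment sending a Kleisli morphism f : A ⟶ T B to T(f†) ∘ μ_B† ∘ η_B : B ⟶ T A defines a dagger on the Kleisli category Kl(T), and the canonical functors C ⟶ Kl(T) and Kl(T) ⟶ C are dagger functors. -/
import Mathlib

open CategoryTheory

/-- A dagger on a category: an involutive, identity-on-objects, contravariant endofunctor. -/
class DaggerCategory (C : Type*) [Category C] where
  dag : ∀ {A B : C}, (A ⟶ B) → (B ⟶ A)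
  dag_id : ∀ (A : C), dag (𝟙 A) = 𝟙 A
  dag_comp : ∀ {A B D : C} (f : A ⟶ B) (g : B ⟶ D), dag (f ≫ g) = dag g ≫ dag f
  dag_dag : ∀ {A B : C} (f : A ⟶ B), dag (dag f) = f

open DaggerCategory

section Aux

variable {C : Type*} [Category C] [DaggerCategory C] (T : Monad C)
  (hT : ∀ {A B : C} (f : A ⟶ B), T.map (dag f) = dag (T.map f))

include hT

/-- Naturality of `δ = μ†`. -/
lemma delta_nat {A B : C} (g : B ⟶ A) :
    T.map g ≫ dag (T.μ.app A) = dag (T.μ.app B) ≫ T.map (T.map g) := by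
  have h := congrArg dag (T.μ.naturality (dag g))
  simp only [Functor.comp_map, Functor.comp_obj, Functor.id_obj, dag_comp] at h
  rw [← hT (T.map (dag g)), ← hT (dag g), dag_dag] at h
  exact h.symm

/-- Counit law: `δ ≫ T(η†) = 1`. -/
lemma delta_counit₁ (A : C) :
    dag (T.μ.app A) ≫ T.map (dag (T.η.app A)) = 𝟙 (T.obj A) := by
  have h := congrArg dag (T.right_unit A)
  rw [dag_comp, dag_id] at h
  rw [hT]
  simpa using h

/-- Coassociativity: `δ ≫ δ = δ ≫ T δ`. -/
lemma delta_coassoc (A : C) :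
    dag (T.μ.app A) ≫ dag (T.μ.app (T.obj A))
      = dag (T.μ.app A) ≫ T.map (dag (T.μ.app A)) := by
  have h := congrArg dag (T.assoc A)
  rw [dag_comp, dag_comp] at h
  rw [hT]
  exact h.symm

variable (hfrob : ∀ A : C,
      dag (T.μ.app (T.obj A)) ≫ T.map (T.μ.app A)
        = T.map (dag (T.μ.app A)) ≫ T.μ.app (T.obj A))

include hfrob

/-- `T η ≫ T δ ≫ μ_{T A} = δ`. -/
lemma frob_red (A : C) :
    T.map (T.η.app A) ≫ T.map (dag (T.μ.app A)) ≫ T.μ.app (T.obj A)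
      = dag (T.μ.app A) := by
  rw [← hfrob, ← Category.assoc, delta_nat T hT (T.η.app A), Category.assoc,
    ← T.map_comp, T.right_unit, T.map_id]
  simp

omit hT in
/-- `η_{T A} ≫ δ_{T A} ≫ T μ = δ`. -/
lemma frob_red₂ (A : C) :
    T.η.app (T.obj A) ≫ dag (T.μ.app (T.obj A)) ≫ T.map (T.μ.app A)
      = dag (T.μ.app A) := by
  rw [hfrob, ← Category.assoc, ← T.η.naturality (dag (T.μ.app A))]
  simp only [Functor.comp_obj, Functor.id_obj, Functor.id_map, Category.assoc]
  rw [T.left_unit]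
  simp

end Aux
/-- Naturality of `μ`, unfolded. -/
lemma mu_nat {C : Type*} [Category C] (T : Monad C) {X Y : C} (g : X ⟶ Y) :
    T.map (T.map g) ≫ T.μ.app Y = T.μ.app X ≫ T.map g := by
  simpa using T.μ.naturality g

/-- Naturality of `η`, unfolded. -/
lemma eta_nat {C : Type*} [Category C] (T : Monad C) {X Y : C} (g : X ⟶ Y) :
    g ≫ T.η.app Y = T.η.app X ≫ T.map g := by
  simpa using T.η.naturality g

/-- For a dagger Frobenius monad `T`, the assignment
`f ↦ T(f†) ∘ μ† ∘ η` is a dagger on the Kleisli category `Kl(T)`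
(it fixes Kleisli identities, reverses Kleisli composition, and is involutive),
and the canonical functors `C ⟶ Kl(T)` and `Kl(T) ⟶ C` are dagger functors. -/
theorem kleisli_dagger {C : Type*} [Category C] [DaggerCategory C] (T : Monad C)
    (hT : ∀ {A B : C} (f : A ⟶ B), T.map (dag f) = dag (T.map f))
    (hfrob : ∀ A : C,
      dag (T.μ.app (T.obj A)) ≫ T.map (T.μ.app A)
        = T.map (dag (T.μ.app A)) ≫ T.μ.app (T.obj A)) :
    -- the candidate dagger on Kleisli morphisms
    let D : ∀ {A B : C}, (A ⟶ T.obj B) → (B ⟶ T.obj A) :=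
      fun {A B} f => T.η.app B ≫ dag (T.μ.app B) ≫ T.map (dag f)
    -- Kleisli identities are fixed
    (∀ A : C, D (T.η.app A) = T.η.app A) ∧
    -- contravariance for Kleisli composition
    (∀ {A B E : C} (f : A ⟶ T.obj B) (g : B ⟶ T.obj E),
      D (f ≫ T.map g ≫ T.μ.app E) = D g ≫ T.map (D f) ≫ T.μ.app A) ∧
    -- involutivity
    (∀ {A B : C} (f : A ⟶ T.obj B), D (D f) = f) ∧
    -- the canonical functor C ⟶ Kl(T), f ↦ η ∘ f, preserves daggers
    (∀ {A B : C} (f : A ⟶ B), D (f ≫ T.η.app B) = dag f ≫ T.η.app A) ∧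
    -- the canonical functor Kl(T) ⟶ C, f ↦ μ ∘ T f, preserves daggers
    (∀ {A B : C} (f : A ⟶ T.obj B),
      dag (T.map f ≫ T.μ.app B) = T.map (D f) ≫ T.μ.app A) := by
  intro D
  refine ⟨?_, ?_, ?_, ?_, ?_⟩
  · -- identities
    intro A
    simp only [D]
    rw [delta_counit₁ T hT, Category.comp_id]
  · -- contravariance
    intro A B E f g
    simp only [D]
    rw [dag_comp, dag_comp, ← hT g, T.map_comp, T.map_comp, T.map_comp, T.map_comp]
    slice_rhs 6 7 => rw [mu_nat T (dag f)]
    slice_rhs 4 6 => rw [frob_red T hT hfrob B]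
    slice_rhs 3 4 => rw [delta_nat T hT (dag g)]
    slice_rhs 2 3 => rw [delta_coassoc T hT E]
    simp only [Category.assoc]
  · -- involutivity
    intro A B f
    simp only [D]
    rw [dag_comp, dag_comp, dag_dag, ← hT (dag f), dag_dag, T.map_comp, T.map_comp]
    slice_lhs 2 3 => rw [← delta_nat T hT f]
    slice_lhs 1 2 => rw [← eta_nat T f]
    slice_lhs 2 4 => rw [frob_red₂ T hfrob B]
    slice_lhs 2 3 => rw [delta_counit₁ T hT B]
    simp
  · -- C ⟶ Kl(T) preserves daggers
    intro A B f
    simp only [D]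
    rw [dag_comp, T.map_comp]
    slice_lhs 2 3 => rw [delta_counit₁ T hT B]
    simp only [Category.id_comp]
    exact (eta_nat T (dag f)).symm
  · -- Kl(T) ⟶ C preserves daggers
    intro A B f
    simp only [D]
    rw [dag_comp, ← hT, T.map_comp, T.map_comp]
    slice_rhs 3 4 => rw [mu_nat T (dag f)]
    slice_rhs 1 3 => rw [frob_red T hT hfrob B]
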